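/- Let n > 3 be odd with prime factorization n = p_1^{α_1} p_2^{α_2} ⋯ p_k^{α_k}. The number of admissible m for which L_n(m) is strictly non-commutative — i.e. x·y ≠ y·x for every pair of distinct non-identity elements x, y of L_n(m) — equals F_n = ∏_{i=1}^{k} (p_i − 3) p_i^{α_i − 1}. -/

import Mathlib

open Finset


/-- `m` is admissible for `n`: `0 < m < n`, `gcd(m, n) = 1` and `gcd(m - 1, n) = 1`. -/
def LAdmissible (n m : ℕ) : Prop :=
  0 < m ∧ m < n ∧ Nat.gcd m n = 1 ∧ Nat.gcd (m - 1) n = 1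

/-- The product of the loop `L_n(m)`: the carrier is `Option (ZMod n)`, with `none`
playing the role of the identity `e` and `some i` the element `i ∈ Z_n`.
`e·x = x·e = x`, `i·i = e`, and for `i ≠ j`, `i·j = m·j - (m-1)·i (mod n)`. -/
def lmul (n m : ℕ) : Option (ZMod n) → Option (ZMod n) → Option (ZMod n)
  | none, x => x
  | some i, none => some i
  | some i, some j =>
      if i = j then none
      else some ((m : ZMod n) * j - ((m : ZMod n) - 1) * i)

/-! ### Auxiliary lemmas -/

lemma prod_isUnit_iff {M N : Type*} [Monoid M] [Monoid N] {x : M × N} :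
    IsUnit x ↔ IsUnit x.1 ∧ IsUnit x.2 := by
  constructor
  · exact fun h => ⟨h.map (MonoidHom.fst M N), h.map (MonoidHom.snd M N)⟩
  · rintro ⟨⟨u, hu⟩, ⟨v, hv⟩⟩
    exact ⟨MulEquiv.prodUnits.symm (u, v), Prod.ext hu hv⟩

lemma ringEquiv_isUnit {R S : Type*} [Ring R] [Ring S] (e : R ≃+* S) {x : R} :
    IsUnit (e x) ↔ IsUnit x :=
  ⟨fun h => by simpa using h.map e.symm.toRingHom, fun h => h.map e.toRingHom⟩

/-- The counting function: the number of `a : ZMod N` with `a`, `a - 1` and `2a - 1`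
all units. -/
noncomputable def gcount (N : ℕ) : ℕ :=
  Nat.card {a : ZMod N // IsUnit a ∧ IsUnit (a - 1) ∧ IsUnit (2 * a - 1)}

lemma gcount_zero : gcount 0 = 0 := by
  have : IsEmpty {a : ZMod 0 // IsUnit a ∧ IsUnit (a - 1) ∧ IsUnit (2 * a - 1)} := by
    constructor
    rintro ⟨a, h1, h2, -⟩
    have h1' : a = 1 ∨ a = -1 := Int.isUnit_iff.mp h1
    rcases h1' with rfl | rfl
    · rcases Int.isUnit_iff.mp h2 with h | h <;> omega
    · rcases Int.isUnit_iff.mp h2 with h | h <;> omega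
  simp [gcount, Nat.card_of_isEmpty]

lemma gcount_one : gcount 1 = 1 := by
  have : Unique {a : ZMod 1 // IsUnit a ∧ IsUnit (a - 1) ∧ IsUnit (2 * a - 1)} := by
    refine ⟨⟨⟨0, ?_, ?_, ?_⟩⟩, fun x => Subtype.ext (Subsingleton.elim _ _)⟩ <;>
      exact IsUnit.of_mul_eq_one 1 (Subsingleton.elim _ _)
  rw [gcount, Nat.card_unique]

lemma gcount_mul {a b : ℕ} (h : Nat.Coprime a b) : gcount (a * b) = gcount a * gcount b := by
  let e := ZMod.chineseRemainder h
  have step1 : gcount (a * b)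
      = Nat.card {x : ZMod a × ZMod b // IsUnit x ∧ IsUnit (x - 1) ∧ IsUnit (2 * x - 1)} := by
    refine Nat.card_congr (Equiv.subtypeEquiv e.toEquiv fun x => ?_)
    have h1 : IsUnit x ↔ IsUnit (e x) := (ringEquiv_isUnit e).symm
    have h2 : IsUnit (x - 1) ↔ IsUnit (e x - 1) := by
      rw [show e x - 1 = e (x - 1) by rw [map_sub, map_one], ringEquiv_isUnit]
    have h3 : IsUnit (2 * x - 1) ↔ IsUnit (2 * e x - 1) := by
      rw [show 2 * e x - 1 = e (2 * x - 1) by rw [map_sub, map_one, map_mul, map_ofNat],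
        ringEquiv_isUnit]
    rw [h1, h2, h3]
    rfl
  have step2 : {x : ZMod a × ZMod b // IsUnit x ∧ IsUnit (x - 1) ∧ IsUnit (2 * x - 1)}
      ≃ {x : ZMod a × ZMod b //
          (IsUnit x.1 ∧ IsUnit (x.1 - 1) ∧ IsUnit (2 * x.1 - 1))
          ∧ (IsUnit x.2 ∧ IsUnit (x.2 - 1) ∧ IsUnit (2 * x.2 - 1))} := by
    refine Equiv.subtypeEquiv (Equiv.refl _) fun x => ?_
    simp only [Equiv.refl_apply]
    rw [prod_isUnit_iff, prod_isUnit_iff (x := x - 1), prod_isUnit_iff (x := 2 * x - 1)]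
    simp only [Prod.fst_sub, Prod.snd_sub, Prod.fst_mul, Prod.snd_mul, Prod.fst_one,
      Prod.snd_one, Prod.fst_ofNat, Prod.snd_ofNat]
    tauto
  rw [step1, Nat.card_congr (step2.trans (Equiv.subtypeProdEquivProd
    (p := fun y : ZMod a => IsUnit y ∧ IsUnit (y - 1) ∧ IsUnit (2 * y - 1))
    (q := fun y : ZMod b => IsUnit y ∧ IsUnit (y - 1) ∧ IsUnit (2 * y - 1)))), Nat.card_prod]
  rfl

lemma gcount_prime_pow {p k : ℕ} (hp : p.Prime) (hpodd : p ≠ 2) (hk : k ≠ 0) :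
    gcount (p ^ k) = (p - 3) * p ^ (k - 1) := by
  haveI : Fact p.Prime := ⟨hp⟩
  haveI : NeZero (p ^ k) := ⟨pow_ne_zero k hp.ne_zero⟩
  set φ := ZMod.castHom (dvd_pow_self p hk) (ZMod p) with hφ
  have h2 : (2 : ZMod p) ≠ 0 := by
    intro h
    have : ((2 : ℕ) : ZMod p) = 0 := by push_cast; exact h
    rw [ZMod.natCast_eq_zero_iff] at this
    exact hpodd ((Nat.prime_dvd_prime_iff_eq hp Nat.prime_two).mp this)
  have h12 : (1 : ZMod p) ≠ 2 := by
    intro h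
    have : ((1 : ℕ) : ZMod p) = ((2 : ℕ) : ZMod p) := by push_cast; exact h
    rw [ZMod.natCast_eq_natCast_iff] at this
    have hp3 : 3 ≤ p := by have := hp.two_le; omega
    have : 1 % p = 2 % p := this
    rw [Nat.mod_eq_of_lt (by omega), Nat.mod_eq_of_lt (by omega)] at this
    omega
  have keyA : ∀ a : ZMod (p ^ k), IsUnit a ↔ φ a ≠ 0 := by
    intro a
    have hval : a = ((a.val : ℕ) : ZMod (p ^ k)) := (ZMod.natCast_rightInverse a).symm
    have hφa : φ a = ((a.val : ℕ) : ZMod p) := by conv_lhs => rw [hval, map_natCast]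
    conv_lhs => rw [hval]
    rw [ZMod.isUnit_iff_coprime, Nat.coprime_pow_right_iff (Nat.pos_of_ne_zero hk),
      ← ZMod.isUnit_iff_coprime, isUnit_iff_ne_zero, ← hφa]
  have keyB : ∀ a : ZMod (p ^ k),
      (IsUnit a ∧ IsUnit (a - 1) ∧ IsUnit (2 * a - 1))
        ↔ φ a ∉ ({0, 1, (2 : ZMod p)⁻¹} : Finset (ZMod p)) := by
    intro a
    rw [keyA a, keyA (a - 1), keyA (2 * a - 1), map_sub, map_sub, map_mul, map_one, map_ofNat]
    simp only [mem_insert, mem_singleton, not_or, sub_ne_zero]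
    constructor
    · rintro ⟨ha, hb, hc⟩
      refine ⟨ha, hb, fun h => ?_⟩
      apply hc
      rw [h, mul_inv_cancel₀ h2]
    · rintro ⟨ha, hb, hc⟩
      refine ⟨ha, hb, fun h => ?_⟩
      apply hc
      field_simp at h ⊢
      rw [mul_comm] at h
      linear_combination h
  set T : Finset (ZMod p) := {0, 1, (2 : ZMod p)⁻¹} with hT
  have hTcard : T.card = 3 := by
    rw [hT, card_insert_of_notMem, card_insert_of_notMem, card_singleton]
    · simp only [mem_singleton]
      intro h
      exact h12 ((inv_eq_one.mp h.symm).symm)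
    · simp only [mem_insert, mem_singleton]
      push_neg
      exact ⟨zero_ne_one, fun h => inv_ne_zero h2 h.symm⟩
  have hfib : ∀ y : ZMod p, (univ.filter fun a => φ a = y).card
      = (univ.filter fun a => φ a = 0).card := by
    intro y
    have hsurj : ∀ y : ZMod p, φ (((y.val : ℕ) : ZMod (p ^ k))) = y := by
      intro y; rw [map_natCast]; exact ZMod.natCast_rightInverse y
    apply Finset.card_nbij' (fun a => a - ((y.val : ℕ) : ZMod (p ^ k)))
      (fun a => a + ((y.val : ℕ) : ZMod (p ^ k)))
    · intro a ha
      simp only [mem_coe, mem_filter, mem_univ, true_and] at ha ⊢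
      rw [map_sub, ha, hsurj, sub_self]
    · intro a ha
      simp only [mem_coe, mem_filter, mem_univ, true_and] at ha ⊢
      rw [map_add, ha, hsurj, zero_add]
    · intro a _; simp
    · intro a _; simp
  have hfib0 : (univ.filter fun a => φ a = 0).card = p ^ (k - 1) := by
    have hsum := Finset.card_eq_sum_card_fiberwise
      (s := (univ : Finset (ZMod (p ^ k)))) (t := (univ : Finset (ZMod p))) (f := φ)
      (fun a _ => mem_univ _)
    rw [card_univ, ZMod.card] at hsum
    have : ∀ y ∈ (univ : Finset (ZMod p)),
        (univ.filter fun a => φ a = y).card = (univ.filter fun a => φ a = 0).card :=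
      fun y _ => hfib y
    rw [Finset.sum_congr rfl this, Finset.sum_const, card_univ, ZMod.card, smul_eq_mul] at hsum
    have hpk : p ^ k = p * p ^ (k - 1) := by
      conv_lhs => rw [show k = 1 + (k - 1) by omega]
      rw [pow_add, pow_one]
    exact (Nat.eq_of_mul_eq_mul_left hp.pos (by rw [← hsum, ← hpk])).symm
  have hmain : gcount (p ^ k) = (univ.filter fun a => φ a ∉ T).card := by
    rw [gcount, Nat.card_eq_fintype_card, Fintype.card_subtype]
    congr 1
    ext a
    simp only [mem_filter, mem_univ, true_and]
    exact keyB a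
  rw [hmain]
  have hsum2 := Finset.card_eq_sum_card_fiberwise
    (s := univ.filter fun a => φ a ∉ T) (t := Tᶜ) (f := φ)
    (fun a ha => by simp only [mem_coe, mem_filter] at ha; simpa using ha.2)
  rw [hsum2]
  have : ∀ y ∈ Tᶜ, ((univ.filter fun a => φ a ∉ T).filter fun a => φ a = y).card
      = p ^ (k - 1) := by
    intro y hy
    rw [Finset.filter_filter]
    have : ((univ : Finset (ZMod (p ^ k))).filter fun a => φ a ∉ T ∧ φ a = y)
        = univ.filter fun a => φ a = y := by
      apply Finset.filter_congr
      intro a _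
      simp only [mem_compl] at hy
      constructor
      · rintro ⟨-, h⟩; exact h
      · intro h; exact ⟨h ▸ hy, h⟩
    rw [this, hfib y, hfib0]
  rw [Finset.sum_congr rfl this, Finset.sum_const, smul_eq_mul, card_compl,
    ZMod.card, hTcard]

noncomputable def gcountAF : ArithmeticFunction ℕ := ⟨gcount, gcount_zero⟩

lemma gcountAF_mult : gcountAF.IsMultiplicative :=
  ⟨gcount_one, fun h => gcount_mul h⟩

lemma gcount_factorization {n : ℕ} (hn : n ≠ 0) :
    gcount n = ∏ p ∈ n.primeFactors, gcount (p ^ n.factorization p) := by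
  have := ArithmeticFunction.IsMultiplicative.multiplicative_factorization gcountAF
    gcountAF_mult hn
  rw [show gcount n = gcountAF n from rfl, this, Finsupp.prod, Nat.support_factorization]
  rfl

lemma gcount_eq_prod {n : ℕ} (hn : 3 < n) (hodd : Odd n) :
    gcount n = ∏ p ∈ n.primeFactors, (p - 3) * p ^ (n.factorization p - 1) := by
  rw [gcount_factorization (by omega)]
  refine Finset.prod_congr rfl fun p hp => ?_
  have hpp : p.Prime := Nat.prime_of_mem_primeFactors hp
  have hp2 : p ≠ 2 := by
    rintro rfl
    exact (Nat.not_even_iff_odd.mpr hodd)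
      ((even_iff_two_dvd).mpr (Nat.dvd_of_mem_primeFactors hp))
  have hk : n.factorization p ≠ 0 := by
    have : p ∈ n.factorization.support := by rwa [Nat.support_factorization]
    exact Finsupp.mem_support_iff.mp this
  exact gcount_prime_pow hpp hp2 hk

lemma transl {n : ℕ} (hn : 3 < n) (m : ℕ) :
    (LAdmissible n m ∧ ∀ x y : ZMod n, x ≠ y →
        lmul n m (some x) (some y) ≠ lmul n m (some y) (some x))
      ↔ (m < n ∧ IsUnit (m : ZMod n) ∧ IsUnit ((m : ZMod n) - 1)
          ∧ IsUnit (2 * (m : ZMod n) - 1)) := by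
  haveI : NeZero n := ⟨by omega⟩
  haveI : Fact (1 < n) := ⟨by omega⟩
  constructor
  · rintro ⟨⟨hm0, hmn, hg1, hg2⟩, hnc⟩
    refine ⟨hmn, ?_, ?_, ?_⟩
    · exact (ZMod.isUnit_iff_coprime m n).mpr hg1
    · have hcast : ((m - 1 : ℕ) : ZMod n) = (m : ZMod n) - 1 := by
        rw [Nat.cast_sub hm0, Nat.cast_one]
      rw [← hcast]
      exact (ZMod.isUnit_iff_coprime (m - 1) n).mpr hg2
    · by_contra hcu
      have hcast : ((2 * m - 1 : ℕ) : ZMod n) = 2 * (m : ZMod n) - 1 := by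
        rw [Nat.cast_sub (by omega), Nat.cast_mul, Nat.cast_ofNat, Nat.cast_one]
      rw [← hcast, ZMod.isUnit_iff_coprime] at hcu
      set d := Nat.gcd (2 * m - 1) n with hd
      have hdn : d ∣ n := Nat.gcd_dvd_right _ _
      have hdm : d ∣ 2 * m - 1 := Nat.gcd_dvd_left _ _
      have hd1 : d ≠ 1 := hcu
      have hd0 : 0 < d := Nat.gcd_pos_of_pos_right _ (by omega)
      have hd2 : 2 ≤ d := by omega
      set z : ZMod n := ((n / d : ℕ) : ZMod n) with hz
      have hndpos : 0 < n / d := Nat.div_pos (Nat.le_of_dvd (by omega) hdn) hd0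
      have hndlt : n / d < n := Nat.div_lt_self (by omega) hd2
      have hzne : z ≠ 0 := by
        rw [hz, Ne, ZMod.natCast_eq_zero_iff]
        intro h
        exact absurd (Nat.le_of_dvd hndpos h) (by omega)
      have hcz : ((2 * m - 1 : ℕ) : ZMod n) * z = 0 := by
        rw [hz, ← Nat.cast_mul, ZMod.natCast_eq_zero_iff]
        obtain ⟨t, ht⟩ := hdm
        refine ⟨t, ?_⟩
        rw [ht, mul_assoc, mul_comm t (n / d), ← mul_assoc, Nat.mul_div_cancel' hdn, mul_comm]
      have := hnc 0 z (Ne.symm hzne)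
      apply this
      simp only [lmul, if_neg hzne.symm, if_neg hzne]
      rw [hcast] at hcz
      congr 1
      ring_nf
      linear_combination hcz
  · rintro ⟨hmn, hu1, hu2, hu3⟩
    have hm0 : 0 < m := by
      rcases Nat.eq_zero_or_pos m with rfl | h
      · exfalso
        simp only [Nat.cast_zero] at hu1
        exact not_isUnit_zero hu1
      · exact h
    refine ⟨⟨hm0, hmn, (ZMod.isUnit_iff_coprime m n).mp hu1, ?_⟩, ?_⟩
    · apply (ZMod.isUnit_iff_coprime (m - 1) n).mp
      rwa [Nat.cast_sub hm0, Nat.cast_one]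
    · intro x y hxy
      simp only [lmul, if_neg hxy, if_neg (Ne.symm hxy), Ne, Option.some.injEq]
      intro h
      have hz : (2 * (m : ZMod n) - 1) * (y - x) = 0 := by linear_combination h
      have hyx : y - x = 0 := hu3.mul_right_eq_zero.mp hz
      exact hxy (sub_eq_zero.mp hyx).symm

/-- The number of admissible `m` for which `L_n(m)` is strictly non-commutative
(i.e. `x·y ≠ y·x` for all distinct non-identity `x, y`) equals
`F_n = ∏ (p_i - 3) * p_i ^ (α_i - 1)`. -/
theorem stmt2 (n : ℕ) (hn : 3 < n) (hodd : Odd n) :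
    {m : ℕ | LAdmissible n m ∧
        ∀ x y : ZMod n, x ≠ y →
          lmul n m (some x) (some y) ≠ lmul n m (some y) (some x)}.ncard
      = ∏ p ∈ n.primeFactors, (p - 3) * p ^ (n.factorization p - 1) := by
  haveI : NeZero n := ⟨by omega⟩
  have hset : {m : ℕ | LAdmissible n m ∧
        ∀ x y : ZMod n, x ≠ y →
          lmul n m (some x) (some y) ≠ lmul n m (some y) (some x)}
      = (fun a : ZMod n => a.val) ''
          {a : ZMod n | IsUnit a ∧ IsUnit (a - 1) ∧ IsUnit (2 * a - 1)} := by
    ext m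
    rw [Set.mem_setOf_eq, transl hn m]
    constructor
    · rintro ⟨hmn, h1, h2, h3⟩
      exact ⟨(m : ZMod n), ⟨h1, h2, h3⟩, ZMod.val_cast_of_lt hmn⟩
    · rintro ⟨a, ⟨h1, h2, h3⟩, rfl⟩
      have hva : ((a.val : ℕ) : ZMod n) = a := ZMod.natCast_rightInverse a
      refine ⟨ZMod.val_lt a, ?_, ?_, ?_⟩ <;> rw [hva]
      · exact h1
      · exact h2
      · exact h3
  rw [hset, Set.ncard_image_of_injective _ (ZMod.val_injective n)]
  have : {a : ZMod n | IsUnit a ∧ IsUnit (a - 1) ∧ IsUnit (2 * a - 1)}.ncard = gcount n := by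
    rw [gcount, ← Nat.card_coe_set_eq]
    exact Nat.card_congr (Equiv.subtypeEquivRight fun _ => Iff.rfl)
  rw [this, gcount_eq_prod hn hodd]
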